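/- Let a_n be the n-th element of {m ≥ 1 : c_m = 1}. Then liminf_{n→∞} a_n/n^2 = 1/6, limsup_{n→∞} a_n/n^2 = 1/2, and the set {a_n/n^2 : n ≥ 1} is dense in the interval [1/6, 1/2]. -/

import Mathlib

-- assume s1 content prepended later; for testing, include it:

/-- binary-to-base-4: `phi k = Σ bit_i(k) * 4^i`. -/
def phi (n : ℕ) : ℕ :=
  if n = 0 then 0 else 4 * phi (n / 2) + n % 2
decreasing_by exact Nat.div_lt_self (Nat.pos_of_ne_zero ‹_›) one_lt_two

@[simp] lemma phi_zero : phi 0 = 0 := by rw [phi]; simp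

lemma phi_two_mul (k : ℕ) : phi (2 * k) = 4 * phi k := by
  rcases Nat.eq_zero_or_pos k with h | h
  · simp [h]
  · rw [phi]
    have : 2 * k ≠ 0 := by omega
    simp [this, Nat.mul_div_cancel_left _ (by norm_num : 0 < 2), Nat.mul_mod_right]

lemma phi_two_mul_add_one (k : ℕ) : phi (2 * k + 1) = 4 * phi k + 1 := by
  rw [phi]
  have h1 : (2 * k + 1) / 2 = k := by omega
  have h2 : (2 * k + 1) % 2 = 1 := by omega
  simp [h1, h2]

@[simp] lemma phi_one : phi 1 = 1 := by
  have := phi_two_mul_add_one 0; simpa using this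

lemma phi_pos {k : ℕ} (hk : 1 ≤ k) : 1 ≤ phi k := by
  induction k using Nat.strong_induction_on with
  | _ k ih =>
    rcases Nat.even_or_odd k with ⟨m, hm⟩ | ⟨m, hm⟩
    · subst hm
      rw [show m + m = 2 * m by ring, phi_two_mul]
      have : 1 ≤ phi m := ih m (by omega) (by omega)
      omega
    · subst hm
      rw [phi_two_mul_add_one]; omega

lemma phi_strictMono : StrictMono phi := by
  have key : ∀ k j, j < k → phi j < phi k := by
    intro k
    induction k using Nat.strong_induction_on with
    | _ k ih =>
      intro j hj
      rcases Nat.lt_or_ge (j / 2) (k / 2) with h | h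
      · have hbj : phi j ≤ 4 * phi (j / 2) + 1 := by
          rcases Nat.even_or_odd j with ⟨m, hm⟩ | ⟨m, hm⟩
          · subst hm; rw [show m + m = 2 * m by ring, phi_two_mul]
            have h2 : (2 * m) / 2 = m := by omega
            rw [h2]; omega
          · subst hm; rw [show 2*m+1 = 2*m+1 from rfl, phi_two_mul_add_one]
            have : (2 * m + 1) / 2 = m := by omega
            rw [this]
        have hbk : 4 * phi (k / 2) ≤ phi k := by
          rcases Nat.even_or_odd k with ⟨m, hm⟩ | ⟨m, hm⟩
          · subst hm; rw [show m + m = 2 * m by ring, phi_two_mul]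
            have : (2 * m) / 2 = m := by omega
            rw [this]
          · subst hm; rw [phi_two_mul_add_one]
            have : (2 * m + 1) / 2 = m := by omega
            rw [this]; omega
        have hrec : phi (j / 2) < phi (k / 2) := ih (k / 2) (by omega) _ h
        omega
      · -- j/2 = k/2, j < k so j = 2m, k = 2m+1
        have hjk : j / 2 = k / 2 := by omega
        have : j = 2 * (j / 2) ∧ k = 2 * (j / 2) + 1 := by omega
        obtain ⟨hj2, hk2⟩ := this
        rw [hj2, hk2, phi_two_mul, phi_two_mul_add_one]
        omega
  exact fun j k h => key k j h

lemma phi_le_sq (k : ℕ) : phi k ≤ k ^ 2 := by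
  induction k using Nat.strong_induction_on with
  | _ k ih =>
    rcases Nat.eq_zero_or_pos k with h | h
    · simp [h]
    rcases Nat.even_or_odd k with ⟨m, hm⟩ | ⟨m, hm⟩
    · subst hm; rw [show m + m = 2 * m by ring, phi_two_mul]
      have := ih m (by omega)
      nlinarith
    · subst hm; rw [phi_two_mul_add_one]
      have := ih m (by omega)
      nlinarith

lemma sq_le_three_phi {k : ℕ} : k ^ 2 + 2 * k ≤ 3 * phi k := by
  induction k using Nat.strong_induction_on with
  | _ k ih =>
    rcases Nat.eq_zero_or_pos k with h | h
    · simp [h]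
    rcases Nat.even_or_odd k with ⟨m, hm⟩ | ⟨m, hm⟩
    · subst hm; rw [show m + m = 2 * m by ring, phi_two_mul]
      have := @ih m (by omega)
      nlinarith
    · subst hm; rw [phi_two_mul_add_one]
      have := @ih m (by omega)
      nlinarith

/-- The enumeration of `{m ≥ 1 : c m = 1}`. -/
def e : ℕ → ℕ
  | 0 => 1
  | 1 => 2
  | (n+2) => 8 * phi (n / 4 + 1) - 1 + n % 4

def InO (m : ℕ) : Prop := m = 1 ∨ m = 2 ∨ ∃ k j, 1 ≤ k ∧ j < 4 ∧ m + 1 = 8 * phi k + j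

/-- membership in the range of `phi` (for positive arguments). -/
def R (u : ℕ) : Prop := ∃ k, 1 ≤ k ∧ phi k = u

lemma R_pos {u : ℕ} (h : R u) : 1 ≤ u := by
  obtain ⟨k, hk, rfl⟩ := h; exact phi_pos hk

lemma R_one : R 1 := ⟨1, le_refl _, phi_one⟩

lemma R_unfold {u : ℕ} (hu : 1 ≤ u) :
    R u ↔ (u = 1 ∨ (∃ w, R w ∧ u = 4 * w) ∨ (∃ w, R w ∧ u = 4 * w + 1)) := by
  constructor
  · rintro ⟨k, hk, rfl⟩
    rcases Nat.even_or_odd k with ⟨m, hm⟩ | ⟨m, hm⟩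
    · subst hm
      rw [show m + m = 2 * m by ring, phi_two_mul]
      exact Or.inr (Or.inl ⟨phi m, ⟨m, by omega, rfl⟩, rfl⟩)
    · subst hm
      rw [phi_two_mul_add_one]
      rcases Nat.eq_zero_or_pos m with h | h
      · subst h; simp
      · exact Or.inr (Or.inr ⟨phi m, ⟨m, h, rfl⟩, rfl⟩)
  · rintro (rfl | ⟨w, ⟨k, hk, rfl⟩, rfl⟩ | ⟨w, ⟨k, hk, rfl⟩, rfl⟩)
    · exact R_one
    · exact ⟨2 * k, by omega, by rw [phi_two_mul]⟩
    · exact ⟨2 * k + 1, by omega, by rw [phi_two_mul_add_one]⟩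

lemma ino_small {m : ℕ} (h : InO m) : m = 1 ∨ m = 2 ∨ 7 ≤ m := by
  rcases h with rfl | rfl | ⟨k, j, hk, hj, hm⟩
  · left; rfl
  · right; left; rfl
  · right; right; have := phi_pos hk; omega

lemma ino_even {u : ℕ} (hu : 1 ≤ u) : InO (2 * u) ↔ R u := by
  rw [R_unfold hu]
  constructor
  · rintro (h | h | ⟨k, j, hk, hj, hm⟩)
    · omega
    · left; omega
    · -- 2u + 1 = 8 phi k + j, odd, so j = 1 or j = 3
      have hp := phi_pos hk
      interval_cases j
      · omega
      · exact Or.inr (Or.inl ⟨phi k, ⟨k, hk, rfl⟩, by omega⟩)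
      · omega
      · exact Or.inr (Or.inr ⟨phi k, ⟨k, hk, rfl⟩, by omega⟩)
  · rintro (rfl | ⟨w, ⟨k, hk, rfl⟩, rfl⟩ | ⟨w, ⟨k, hk, rfl⟩, rfl⟩)
    · right; left; rfl
    · exact Or.inr (Or.inr ⟨k, 1, hk, by omega, by omega⟩)
    · exact Or.inr (Or.inr ⟨k, 3, hk, by omega, by omega⟩)

lemma ino_odd (v : ℕ) : InO (2 * v + 1) ↔ R (v + 1) := by
  rw [R_unfold (by omega : 1 ≤ v + 1)]
  constructor
  · rintro (h | h | ⟨k, j, hk, hj, hm⟩)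
    · left; omega
    · omega
    · have hp := phi_pos hk
      interval_cases j
      · exact Or.inr (Or.inl ⟨phi k, ⟨k, hk, rfl⟩, by omega⟩)
      · omega
      · exact Or.inr (Or.inr ⟨phi k, ⟨k, hk, rfl⟩, by omega⟩)
      · omega
  · rintro (h | ⟨w, ⟨k, hk, rfl⟩, hv⟩ | ⟨w, ⟨k, hk, rfl⟩, hv⟩)
    · left; omega
    · exact Or.inr (Or.inr ⟨k, 0, hk, by omega, by omega⟩)
    · exact Or.inr (Or.inr ⟨k, 2, hk, by omega, by omega⟩)

/-- block lemma: for the last position in a block. -/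
lemma ino_block3 (n : ℕ) : InO (4 * n + 3) ↔ ∃ u, R u ∧ n + 1 = 2 * u := by
  constructor
  · rintro (h | h | ⟨k, j, hk, hj, hm⟩)
    · omega
    · omega
    · have hp := phi_pos hk
      interval_cases j
      · exact ⟨phi k, ⟨k, hk, rfl⟩, by omega⟩
      · omega
      · omega
      · omega
  · rintro ⟨u, ⟨k, hk, rfl⟩, hn⟩
    exact Or.inr (Or.inr ⟨k, 0, hk, by omega, by omega⟩)

lemma ino_block_low {n r : ℕ} (hn : 1 ≤ n) (hr : r < 3) :
    InO (4 * n + r) ↔ ∃ u, R u ∧ n = 2 * u := by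
  constructor
  · rintro (h | h | ⟨k, j, hk, hj, hm⟩)
    · omega
    · omega
    · have hp := phi_pos hk
      have : j = r + 1 := by omega
      exact ⟨phi k, ⟨k, hk, rfl⟩, by omega⟩
  · rintro ⟨u, ⟨k, hk, rfl⟩, hn2⟩
    exact Or.inr (Or.inr ⟨k, r + 1, hk, by omega, by omega⟩)

lemma e_zero : e 0 = 1 := rfl
lemma e_one : e 1 = 2 := rfl

lemma e_add_two (n : ℕ) : e (n + 2) + 1 = 8 * phi (n / 4 + 1) + n % 4 := by
  have := phi_pos (show 1 ≤ n / 4 + 1 by omega)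
  show 8 * phi (n / 4 + 1) - 1 + n % 4 + 1 = _
  omega

lemma range_e (m : ℕ) : (∃ i, e i = m) ↔ InO m := by
  constructor
  · rintro ⟨i, rfl⟩
    match i with
    | 0 => left; rfl
    | 1 => right; left; rfl
    | n + 2 =>
      exact Or.inr (Or.inr ⟨n / 4 + 1, n % 4, by omega, by omega, e_add_two n⟩)
  · rintro (rfl | rfl | ⟨k, j, hk, hj, hm⟩)
    · exact ⟨0, rfl⟩
    · exact ⟨1, rfl⟩
    · refine ⟨4 * (k - 1) + j + 2, ?_⟩
      have h1 : (4 * (k - 1) + j) / 4 + 1 = k := by omega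
      have h2 : (4 * (k - 1) + j) % 4 = j := by omega
      have := e_add_two (4 * (k - 1) + j)
      rw [h1, h2] at this
      omega

lemma e_strictMono : StrictMono e := by
  apply strictMono_nat_of_lt_succ
  intro n
  match n with
  | 0 => norm_num [e_zero, e_one]
  | 1 =>
    have := e_add_two 0
    have : e 2 + 1 = 8 * phi 1 := by simpa using this
    simp [e_one]; omega
  | n + 2 =>
    show e (n + 2) < e (n + 1 + 2)
    have h1 := e_add_two n
    have h2 := e_add_two (n + 1)
    rcases Nat.lt_or_ge (n % 4) 3 with h | h
    · have ha : (n + 1) / 4 = n / 4 := by omega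
      have hb : (n + 1) % 4 = n % 4 + 1 := by omega
      rw [ha, hb] at h2
      omega
    · have ha : (n + 1) / 4 = n / 4 + 1 := by omega
      have hb : (n + 1) % 4 = 0 := by omega
      rw [ha, hb] at h2
      have := phi_strictMono (show n / 4 + 1 < n / 4 + 1 + 1 by omega)
      omega

lemma e_pos (i : ℕ) : 1 ≤ e i := by
  match i with
  | 0 => exact le_refl _
  | 1 => norm_num [e_one]
  | n + 2 =>
    have := e_add_two n
    have := phi_pos (show 1 ≤ n / 4 + 1 by omega)
    omega

section count
variable {p : ℕ → Prop} [DecidablePred p]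

lemma count_e (hp : ∀ m, p m ↔ ∃ i, e i = m) (n : ℕ) : Nat.count p (e n) = n := by
  rw [Nat.count_eq_card_filter_range]
  have : Finset.filter p (Finset.range (e n)) = Finset.image e (Finset.range n) := by
    ext m
    simp only [Finset.mem_filter, Finset.mem_range, Finset.mem_image]
    constructor
    · rintro ⟨hm, hpm⟩
      obtain ⟨i, rfl⟩ := (hp m).mp hpm
      exact ⟨i, e_strictMono.lt_iff_lt.mp hm, rfl⟩
    · rintro ⟨i, hi, rfl⟩
      exact ⟨e_strictMono (by omega), (hp _).mpr ⟨i, rfl⟩⟩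
  rw [this, Finset.card_image_of_injective _ e_strictMono.injective, Finset.card_range]

lemma nth_eq_e (hp : ∀ m, p m ↔ ∃ i, e i = m) (n : ℕ) : Nat.nth p n = e n := by
  have h1 : p (e n) := (hp _).mpr ⟨n, rfl⟩
  have := Nat.nth_count h1
  rwa [count_e hp n] at this

end count

lemma zmod2_add_eq_one_iff (x y : ZMod 2) : x + y = 1 ↔ ((x = 1) ↔ ¬ (y = 1)) := by
  revert x y; decide

lemma c_char (c : ℕ → ZMod 2) (hc0 : c 0 = 0) (hc1 : c 1 = 1) (hc2 : c 2 = 1) (hc3 : c 3 = 0)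
    (h40 : ∀ n : ℕ, 1 ≤ n → c (4 * n) = c (4 * n - 1))
    (h41 : ∀ n : ℕ, 1 ≤ n → c (4 * n + 1) = c (4 * n - 1))
    (h42 : ∀ n : ℕ, 1 ≤ n → c (4 * n + 2) = c (4 * n - 1))
    (h43 : ∀ n : ℕ, 1 ≤ n → c (4 * n + 3) = c (4 * n - 1) + c n) :
    ∀ m, c m = 1 ↔ InO m := by
  intro m
  induction m using Nat.strong_induction_on with
  | _ m ih =>
    rcases Nat.lt_or_ge m 7 with hm | hm
    · -- small cases
      have not_ino : ∀ m', m' < 7 → m' ≠ 1 → m' ≠ 2 → ¬ InO m' := by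
        intro m' h1 h2 h3 hino
        rcases ino_small hino with h | h | h <;> omega
      interval_cases m
      · simp only [hc0]; constructor
        · intro h; exact absurd h (by decide)
        · intro h; exact absurd h (not_ino 0 (by omega) (by omega) (by omega))
      · rw [hc1]; exact ⟨fun _ => Or.inl rfl, fun _ => rfl⟩
      · rw [hc2]; exact ⟨fun _ => Or.inr (Or.inl rfl), fun _ => rfl⟩
      · simp only [hc3]; constructor
        · intro h; exact absurd h (by decide)
        · intro h; exact absurd h (not_ino 3 (by omega) (by omega) (by omega))
      · have h := h40 1 le_rfl; norm_num at h
        rw [h, hc3]; constructor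
        · intro h; exact absurd h (by decide)
        · intro h; exact absurd h (not_ino 4 (by omega) (by omega) (by omega))
      · have h := h41 1 le_rfl; norm_num at h
        rw [h, hc3]; constructor
        · intro h; exact absurd h (by decide)
        · intro h; exact absurd h (not_ino 5 (by omega) (by omega) (by omega))
      · have h := h42 1 le_rfl; norm_num at h
        rw [h, hc3]; constructor
        · intro h; exact absurd h (by decide)
        · intro h; exact absurd h (not_ino 6 (by omega) (by omega) (by omega))
    · -- m ≥ 7
      obtain ⟨n, r, hr4, rfl⟩ : ∃ n r, r < 4 ∧ m = 4 * n + r :=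
        ⟨m / 4, m % 4, by omega, by omega⟩
      have hn1 : 1 ≤ n := by omega
      have hsub : 4 * n - 1 = 4 * (n - 1) + 3 := by omega
      have ihprev : c (4 * n - 1) = 1 ↔ (∃ u, R u ∧ n = 2 * u) := by
        rw [hsub, ih (4 * (n - 1) + 3) (by omega), ino_block3]
        simp only [show n - 1 + 1 = n from by omega]
      interval_cases r
      · rw [show 4 * n + 0 = 4 * n by omega, h40 n hn1, ihprev]
        exact (ino_block_low hn1 (by omega : (0:ℕ) < 3)).symm
      · rw [h41 n hn1, ihprev, ino_block_low hn1 (by omega : (1:ℕ) < 3)]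
      · rw [h42 n hn1, ihprev, ino_block_low hn1 (by omega : (2:ℕ) < 3)]
      · rw [h43 n hn1, ino_block3 n, zmod2_add_eq_one_iff, ihprev,
          ih n (by omega)]
        rcases Nat.even_or_odd n with ⟨u, hu⟩ | ⟨v, hv⟩
        · have hu2 : n = 2 * u := by omega
          have hu1 : 1 ≤ u := by omega
          subst hu2
          rw [ino_even hu1]
          have hsa : (∃ u', R u' ∧ 2 * u = 2 * u') ↔ R u := by
            constructor
            · rintro ⟨u', h, he⟩
              have h2 : u' = u := by omega
              subst h2; exact h
            · intro h; exact ⟨u, h, rfl⟩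
          have hto : ¬ (∃ w, R w ∧ 2 * u + 1 = 2 * w) := by
            rintro ⟨w, _, he⟩; omega
          rw [hsa, iff_false_intro hto, iff_false]
          exact iff_not_self
        · have hv2 : n = 2 * v + 1 := by omega
          subst hv2
          rw [ino_odd]
          have hsa : ¬ (∃ u', R u' ∧ 2 * v + 1 = 2 * u') := by
            rintro ⟨u', hu', he⟩; omega
          have hto : (∃ w, R w ∧ 2 * v + 1 + 1 = 2 * w) ↔ R (v + 1) := by
            constructor
            · rintro ⟨w, h, he⟩
              have h2 : w = v + 1 := by omega
              subst h2; exact h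
            · intro h; exact ⟨v + 1, h, rfl⟩
          rw [iff_false_intro hsa, hto, false_iff, not_not]

open Filter

lemma phi_pow (m : ℕ) : phi (2 ^ m) = 4 ^ m := by
  induction m with
  | zero => simp
  | succ m ih => rw [pow_succ, mul_comm, phi_two_mul, ih, pow_succ, mul_comm]

lemma phi_pred_pow (m : ℕ) : 3 * phi (2 ^ m - 1) = 4 ^ m - 1 := by
  induction m with
  | zero => simp
  | succ m ih =>
    have h2 : 1 ≤ 2 ^ m := Nat.one_le_two_pow
    have h4 : 1 ≤ 4 ^ m := Nat.one_le_pow _ _ (by norm_num)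
    have he : 2 ^ (m + 1) - 1 = 2 * (2 ^ m - 1) + 1 := by
      rw [pow_succ]; omega
    rw [he, phi_two_mul_add_one, pow_succ]
    omega

set_option maxHeartbeats 2000000 in
theorem a_ratio_liminf_limsup_dense (c : ℕ → ZMod 2) (hc0 : c 0 = 0) (hc1 : c 1 = 1) (hc2 : c 2 = 1) (hc3 : c 3 = 0)
    (h40 : ∀ n : ℕ, 1 ≤ n → c (4 * n) = c (4 * n - 1))
    (h41 : ∀ n : ℕ, 1 ≤ n → c (4 * n + 1) = c (4 * n - 1))
    (h42 : ∀ n : ℕ, 1 ≤ n → c (4 * n + 2) = c (4 * n - 1))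
    (h43 : ∀ n : ℕ, 1 ≤ n → c (4 * n + 3) = c (4 * n - 1) + c n)
    (a : ℕ → ℕ) (ha0 : a 0 = 0)
    (ha : ∀ n : ℕ, a (n + 1) = Nat.nth (fun m => 1 ≤ m ∧ c m = 1) n) :
    liminf (fun n : ℕ => (a n : ℝ) / (n : ℝ) ^ 2) atTop = 1 / 6 ∧
    limsup (fun n : ℕ => (a n : ℝ) / (n : ℝ) ^ 2) atTop = 1 / 2 ∧
    Set.Icc (1 / 6 : ℝ) (1 / 2) ⊆
      closure {x : ℝ | ∃ n : ℕ, 1 ≤ n ∧ x = (a n : ℝ) / (n : ℝ) ^ 2} := by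
  classical
  have hchar := c_char c hc0 hc1 hc2 hc3 h40 h41 h42 h43
  have hPiff : ∀ m, (fun m => 1 ≤ m ∧ c m = 1) m ↔ ∃ i, e i = m := by
    intro m
    constructor
    · rintro ⟨h1, h2⟩; exact (range_e m).mpr ((hchar m).mp h2)
    · intro h
      have hino := (range_e m).mp h
      have hm1 : 1 ≤ m := by rcases ino_small hino with rfl | rfl | h <;> omega
      exact ⟨hm1, (hchar m).mpr hino⟩
  have hae : ∀ n, a (n + 1) = e n := fun n => by rw [ha n, nth_eq_e hPiff n]
  set r : ℕ → ℝ := fun n : ℕ => (a n : ℝ) / (n : ℝ) ^ 2 with hr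
  -- ℕ bounds
  have key_low : ∀ n : ℕ, 1 ≤ n → n ^ 2 ≤ 6 * a n := by
    intro n hn
    match n, hn with
    | 1, _ => rw [show a 1 = e 0 from hae 0]; norm_num [e_zero]
    | 2, _ => rw [show a 2 = e 1 from hae 1]; norm_num [e_one]
    | (i+3), _ =>
      rw [show a (i+3) = e (i+2) from hae (i+2)]
      have h1 := e_add_two i
      obtain ⟨k, hk⟩ : ∃ k, i / 4 + 1 = k := ⟨_, rfl⟩
      rw [hk] at h1
      have hk1 : 1 ≤ k := by omega
      have hik : i + 3 ≤ 4 * k + 2 := by omega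
      have hj : i % 4 ≤ 3 := by omega
      have h3 : k ^ 2 + 2 * k ≤ 3 * phi k := sq_le_three_phi
      have hsq : (i + 3) ^ 2 ≤ (4 * k + 2) ^ 2 := Nat.pow_le_pow_left hik 2
      have e1 : (4 * k + 2) ^ 2 = 16 * k ^ 2 + 16 * k + 4 := by ring
      have e2 : 48 * phi k ≤ 6 * e (i + 2) + 6 := by omega
      linarith [hsq, e1, h3, e2, hk1]
  have key_high : ∀ n : ℕ, 1 ≤ n → 2 * a n ≤ n ^ 2 + 2 * n + 5 := by
    intro n hn
    match n, hn with
    | 1, _ => rw [show a 1 = e 0 from hae 0]; norm_num [e_zero]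
    | 2, _ => rw [show a 2 = e 1 from hae 1]; norm_num [e_one]
    | (i+3), _ =>
      rw [show a (i+3) = e (i+2) from hae (i+2)]
      have h1 := e_add_two i
      obtain ⟨k, hk⟩ : ∃ k, i / 4 + 1 = k := ⟨_, rfl⟩
      rw [hk] at h1
      have hk1 : 1 ≤ k := by omega
      have hik' : 4 * k ≤ i + 4 := by omega
      have hj : i % 4 ≤ 3 := by omega
      have h2 : phi k ≤ k ^ 2 := phi_le_sq k
      have hsq : (4 * k) ^ 2 ≤ (i + 4) ^ 2 := Nat.pow_le_pow_left hik' 2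
      have e1 : (4 * k) ^ 2 = 16 * k ^ 2 := by ring
      have e2 : 2 * e (i + 2) ≤ 16 * phi k + 4 := by omega
      have e3 : (i + 4) ^ 2 = (i + 3) ^ 2 + 2 * (i + 3) + 1 := by ring
      linarith [hsq, e1, e2, e3, h2]
  -- real bounds
  have hlow : ∀ n : ℕ, 1 ≤ n → (1 / 6 : ℝ) ≤ r n := by
    intro n hn
    have hc := key_low n hn
    have hcast : ((n : ℝ)) ^ 2 ≤ 6 * (a n : ℝ) := by exact_mod_cast hc
    have hnpos : (0 : ℝ) < (n : ℝ) := by exact_mod_cast hn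
    have hpos : (0 : ℝ) < (n : ℝ) ^ 2 := by positivity
    show (1 / 6 : ℝ) ≤ (a n : ℝ) / (n : ℝ) ^ 2
    rw [le_div_iff₀ hpos]
    linarith
  have hhigh : ∀ n : ℕ, 1 ≤ n → r n ≤ 1 / 2 + 4 / (n : ℝ) := by
    intro n hn
    have hc := key_high n hn
    have hcast : 2 * (a n : ℝ) ≤ (n : ℝ) ^ 2 + 2 * n + 5 := by exact_mod_cast hc
    have hn1 : (1 : ℝ) ≤ (n : ℝ) := by exact_mod_cast hn
    have hpos : (0 : ℝ) < (n : ℝ) ^ 2 := by positivity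
    show (a n : ℝ) / (n : ℝ) ^ 2 ≤ 1 / 2 + 4 / (n : ℝ)
    rw [div_le_iff₀ hpos]
    have hexp : (1 / 2 + 4 / (n : ℝ)) * (n : ℝ) ^ 2 = (n : ℝ) ^ 2 / 2 + 4 * n := by
      field_simp
    rw [hexp]
    nlinarith
  have hbd5 : ∀ n : ℕ, r n ≤ 5 := by
    intro n
    rcases Nat.eq_zero_or_pos n with h | h
    · subst h; show (a 0 : ℝ) / ((0:ℕ) : ℝ) ^ 2 ≤ 5; norm_num
    · have h1 := hhigh n h
      have hn1 : (1 : ℝ) ≤ (n : ℝ) := by exact_mod_cast h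
      have : 4 / (n : ℝ) ≤ 4 := by
        rw [div_le_iff₀ (by linarith)]; nlinarith
      linarith
  have hbd0 : ∀ n : ℕ, 0 ≤ r n := fun n => by positivity
  have hBddAbove : IsBoundedUnder (· ≤ ·) atTop r := isBoundedUnder_of ⟨5, hbd5⟩
  have hBddBelow : IsBoundedUnder (· ≥ ·) atTop r := isBoundedUnder_of ⟨0, hbd0⟩
  -- value of a at 4k-1
  have ha4k : ∀ k : ℕ, 1 ≤ k → a (4 * k - 1) + 1 = 8 * phi k := by
    intro k hk
    have h1 : 4 * k - 1 = (4 * (k - 1) + 2) + 1 := by omega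
    rw [h1, hae (4 * (k - 1) + 2)]
    have h2 := e_add_two (4 * (k - 1))
    have h3 : (4 * (k - 1)) / 4 + 1 = k := by omega
    have h4 : (4 * (k - 1)) % 4 = 0 := by omega
    rw [h3, h4] at h2
    omega
  -- limsup lower bound via subsequence n = 4*2^N - 1
  have limsup_ge : (1 / 2 : ℝ) ≤ limsup r atTop := by
    apply le_limsup_of_frequently_le ?_ hBddAbove
    rw [frequently_atTop]
    intro N
    obtain ⟨n, hn⟩ : ∃ n, 4 * 2 ^ N - 1 = n := ⟨_, rfl⟩
    have h2N : N < 2 ^ N := Nat.lt_two_pow_self (n := N)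
    have hk1 : 1 ≤ 2 ^ N := Nat.one_le_two_pow
    refine ⟨n, by omega, ?_⟩
    have hval := ha4k (2 ^ N) hk1
    rw [phi_pow, hn] at hval
    have hnn : n + 1 = 4 * 2 ^ N := by omega
    have hcn : (n : ℝ) = 4 * (2 : ℝ) ^ N - 1 := by
      have h := congrArg (Nat.cast (R := ℝ)) hnn
      push_cast at h
      linarith
    have hca : (a n : ℝ) = 8 * (4 : ℝ) ^ N - 1 := by
      have h := congrArg (Nat.cast (R := ℝ)) hval
      push_cast at h
      linarith
    have h42 : (4 : ℝ) ^ N = ((2 : ℝ) ^ N) ^ 2 := by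
      rw [show (4:ℝ) = 2 ^ 2 by norm_num, ← pow_mul, mul_comm, pow_mul]
    have hx1 : (1 : ℝ) ≤ (2 : ℝ) ^ N := by
      exact_mod_cast (Nat.one_le_two_pow : 1 ≤ 2 ^ N)
    show (1 / 2 : ℝ) ≤ (a n : ℝ) / (n : ℝ) ^ 2
    rw [le_div_iff₀ (by rw [hcn]; nlinarith [hx1])]
    rw [hca, hcn, h42]
    nlinarith
  have limsup_le : limsup r atTop ≤ (1 / 2 : ℝ) := by
    have hg0 : Tendsto (fun n : ℕ => (4 : ℝ) / n) atTop (nhds 0) :=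
      tendsto_const_div_atTop_nhds_zero_nat 4
    have hg : Tendsto (fun n : ℕ => 1 / 2 + (4 : ℝ) / n) atTop (nhds (1 / 2)) := by
      simpa using tendsto_const_nhds.add hg0
    have h1 : limsup r atTop ≤ limsup (fun n : ℕ => 1 / 2 + (4 : ℝ) / n) atTop := by
      apply limsup_le_limsup
      · filter_upwards [eventually_ge_atTop 1] with n hn using hhigh n hn
      · exact hBddBelow.isCoboundedUnder_le
      · exact hg.isBoundedUnder_le
    rw [hg.limsup_eq] at h1
    exact h1
  -- liminf lower bound
  have liminf_ge : (1 / 6 : ℝ) ≤ liminf r atTop := by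
    apply le_liminf_of_le hBddAbove.isCoboundedUnder_ge
    filter_upwards [eventually_ge_atTop 1] with n hn using hlow n hn
  -- liminf upper bound via subsequence
  have liminf_le : liminf r atTop ≤ (1 / 6 : ℝ) := by
    by_contra hcon
    push_neg at hcon
    set ε := (liminf r atTop - 1 / 6) / 2 with hε
    have hεpos : 0 < ε := by rw [hε]; linarith
    have hfreq : ∃ᶠ n in atTop, r n ≤ 1 / 6 + ε := by
      rw [frequently_atTop]
      intro N
      obtain ⟨M, hM⟩ := exists_nat_gt (7 / ε)
      obtain ⟨m, hm⟩ : ∃ m, N + M + 1 = m := ⟨_, rfl⟩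
      obtain ⟨k, hkdef⟩ : ∃ k, 2 ^ m - 1 = k := ⟨_, rfl⟩
      have h2m : m < 2 ^ m := Nat.lt_two_pow_self (n := m)
      have h22 : 2 ≤ 2 ^ m := by
        calc 2 = 2 ^ 1 := rfl
        _ ≤ 2 ^ m := Nat.pow_le_pow_right (by norm_num) (by omega)
      have hk1 : 1 ≤ k := by omega
      obtain ⟨n, hn⟩ : ∃ n, 4 * k - 1 = n := ⟨_, rfl⟩
      have hnm : m + 1 ≤ n := by omega
      refine ⟨n, by omega, ?_⟩
      have hval := ha4k k hk1
      rw [hn] at hval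
      have hphi := phi_pred_pow m
      rw [hkdef] at hphi
      have h4m : 1 ≤ 4 ^ m := Nat.one_le_pow _ _ (by norm_num)
      have h6a : 6 * a n + 22 = 16 * 4 ^ m := by omega
      have hn5 : n + 5 = 4 * 2 ^ m := by omega
      have hnpos : (0 : ℝ) < (n : ℝ) := by
        exact_mod_cast (show (0:ℕ) < n by omega)
      have hnR : (7 : ℝ) / n ≤ ε := by
        have hnm' : (M : ℝ) < (n : ℝ) := by exact_mod_cast (show M < n by omega)
        rw [div_le_iff₀ hnpos]
        have h7ε : 7 / ε < (n : ℝ) := by linarith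
        rw [div_lt_iff₀ hεpos] at h7ε
        linarith
      have hmain : r n ≤ 1 / 6 + 7 / (n : ℝ) := by
        have hc6 : (6 : ℝ) * (a n : ℝ) + 22 = 16 * (4:ℝ) ^ m := by
          have h := congrArg (Nat.cast (R := ℝ)) h6a
          push_cast at h
          linarith
        have hcn : (n : ℝ) + 5 = 4 * (2:ℝ) ^ m := by
          have h := congrArg (Nat.cast (R := ℝ)) hn5
          push_cast at h
          linarith
        have h42 : (4 : ℝ) ^ m = ((2 : ℝ) ^ m) ^ 2 := by
          rw [show (4:ℝ) = 2 ^ 2 by norm_num, ← pow_mul, mul_comm, pow_mul]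
        have hx1 : ((m : ℝ)) + 1 ≤ (2 : ℝ) ^ m := by
          exact_mod_cast (show m + 1 ≤ 2 ^ m from h2m)
        have hm2 : (2 : ℝ) ≤ (m : ℝ) + 1 := by
          have h1m : (1:ℝ) ≤ (m:ℝ) := by exact_mod_cast (show 1 ≤ m by omega)
          linarith
        show (a n : ℝ) / (n : ℝ) ^ 2 ≤ 1 / 6 + 7 / (n : ℝ)
        rw [div_le_iff₀ (by positivity)]
        have hexp : (1 / 6 + 7 / (n : ℝ)) * (n : ℝ) ^ 2 = (n:ℝ)^2 / 6 + 7 * n := by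
          field_simp
        rw [hexp]
        have hc2 : ((n:ℝ))^2 = (4*(2:ℝ)^m - 5)^2 := by
          rw [show ((n:ℝ)) = 4*(2:ℝ)^m - 5 by linarith]
        nlinarith [hc6, hc2, h42, hx1, hm2]
      linarith
    have hll := liminf_le_of_frequently_le hfreq hBddBelow
    rw [hε] at hll
    linarith
  refine ⟨le_antisymm liminf_le liminf_ge, le_antisymm limsup_le limsup_ge, ?_⟩
  -- density
  intro t ht
  obtain ⟨ht1, ht2⟩ := ht
  rw [Metric.mem_closure_iff]
  intro ε hεpos
  obtain ⟨M, hM⟩ := exists_nat_gt (4 / ε)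
  have hinv : ∀ L : ℕ, ∃ k : ℕ, 1 ≤ k ∧ 2 ^ L ≤ k ∧
      (3 * (phi k : ℝ) + 1) / (6 * ((k : ℝ) + 1) ^ 2) ≤ t ∧
      t ≤ (phi k : ℝ) / (2 * (k : ℝ) ^ 2) := by
    intro L
    induction L with
    | zero =>
      refine ⟨1, le_refl _, by norm_num, ?_, ?_⟩
      · norm_num [phi_one]; linarith
      · norm_num [phi_one]; linarith
    | succ L ihL =>
      obtain ⟨k, hk1, hkL, hmlo, hMhi⟩ := ihL
      have hK : (1 : ℝ) ≤ (k : ℝ) := by exact_mod_cast hk1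
      have hK0 : (k : ℝ) ≠ 0 := by linarith
      have hphi2k : (phi (2 * k) : ℝ) = 4 * phi k := by exact_mod_cast phi_two_mul k
      have hphi2k1 : (phi (2 * k + 1) : ℝ) = 4 * (phi k : ℝ) + 1 := by
        exact_mod_cast phi_two_mul_add_one k
      have hpow : 2 ^ (L + 1) ≤ 2 * k := by rw [pow_succ]; omega
      have hE1 : (phi (2 * k) : ℝ) / (2 * ((2 * k : ℕ) : ℝ) ^ 2)
          = (phi k : ℝ) / (2 * (k : ℝ) ^ 2) := by
        rw [hphi2k]
        push_cast
        field_simp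
        ring
      have hE2 : (3 * (phi (2 * k + 1) : ℝ) + 1) / (6 * (((2 * k + 1 : ℕ) : ℝ) + 1) ^ 2)
          = (3 * (phi k : ℝ) + 1) / (6 * ((k : ℝ) + 1) ^ 2) := by
        rw [hphi2k1]
        push_cast
        have h1 : ((k:ℝ) + 1) ≠ 0 := by linarith
        field_simp
        ring
      by_cases hcase : (3 * (phi (2 * k) : ℝ) + 1) / (6 * (((2 * k : ℕ) : ℝ) + 1) ^ 2) ≤ t
      · exact ⟨2 * k, by omega, hpow, hcase, hE1 ▸ hMhi⟩
      · push_neg at hcase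
        refine ⟨2 * k + 1, by omega, by omega, hE2 ▸ hmlo, ?_⟩
        -- t < mlo (2k) ≤ Mhi (2k+1)
        have hE3 : (3 * (phi (2 * k) : ℝ) + 1) / (6 * (((2 * k : ℕ) : ℝ) + 1) ^ 2)
            ≤ (phi (2 * k + 1) : ℝ) / (2 * ((2 * k + 1 : ℕ) : ℝ) ^ 2) := by
          rw [hphi2k, hphi2k1]
          push_cast
          rw [div_le_div_iff₀ (by positivity) (by positivity)]
          have hphipos : (0:ℝ) ≤ (phi k : ℝ) := by positivity
          nlinarith [sq_nonneg (2*(k:ℝ)+1), hphipos, hK]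
        exact le_trans hcase.le hE3
  obtain ⟨k, hk1, hkM, hmlo, hMhi⟩ := hinv M
  have hK : (1 : ℝ) ≤ ((k:ℝ)) := by exact_mod_cast hk1
  have hK0 : (0 : ℝ) < ((k:ℝ)) := by linarith
  have hKM : (M : ℝ) < ((k:ℝ)) := by
    have : M < k := lt_of_lt_of_le (Nat.lt_two_pow_self (n := M)) hkM
    exact_mod_cast this
  have hKε : 4 / ((k:ℝ)) < ε := by
    have h4ε : 4 / ε < ((k:ℝ)) := by linarith
    rw [div_lt_iff₀ hεpos] at h4ε
    rw [div_lt_iff₀ hK0]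
    linarith
  obtain ⟨n, hn⟩ : ∃ n, 4 * k - 1 = n := ⟨_, rfl⟩
  have hval := ha4k k hk1
  rw [hn] at hval
  have hnn : n + 1 = 4 * k := by omega
  have hcn : (n : ℝ) = 4 * ((k:ℝ)) - 1 := by
    have h := congrArg (Nat.cast (R := ℝ)) hnn
    push_cast at h
    linarith
  have hca : (a n : ℝ) = 8 * ((phi k : ℝ)) - 1 := by
    have h := congrArg (Nat.cast (R := ℝ)) hval
    push_cast at h
    linarith
  have hphi_1 : (1 : ℝ) ≤ ((phi k : ℝ)) := by exact_mod_cast phi_pos hk1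
  have hphi_2 : ((phi k : ℝ)) ≤ ((k:ℝ)) ^ 2 := by exact_mod_cast phi_le_sq k
  have hphi_3 : ((k:ℝ)) ^ 2 + 2 * ((k:ℝ)) ≤ 3 * ((phi k : ℝ)) := by exact_mod_cast (sq_le_three_phi (k := k))
  have hb : r n = (8 * ((phi k : ℝ)) - 1) / ((4 * ((k:ℝ)) - 1) ^ 2) := by
    show (a n : ℝ) / (n : ℝ) ^ 2 = _
    rw [hca, hcn]
  have hden : (0:ℝ) < (4 * ((k:ℝ)) - 1) ^ 2 := by nlinarith
  -- Claim A : Mhi k ≤ r n + 4/((k:ℝ))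
  have hclaimA : ((phi k : ℝ)) / (2 * ((k:ℝ)) ^ 2) ≤ r n + 4 / ((k:ℝ)) := by
    rw [hb, div_add_div _ _ (by positivity) (by linarith), div_le_div_iff₀ (by positivity) (by positivity)]
    have h1 : ((phi k : ℝ)) * ((k:ℝ)) ≤ ((k:ℝ)) ^ 2 * ((k:ℝ)) := by nlinarith
    have h2 : ((k:ℝ)) ^ 3 ≤ ((k:ℝ)) ^ 4 := by nlinarith
    nlinarith [h1, h2, hphi_1, hK, sq_nonneg ((k:ℝ)), mul_nonneg (mul_nonneg hK0.le hK0.le) (le_trans zero_le_one hphi_1)]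
  -- Claim B : r n ≤ mlo k + 4/((k:ℝ))
  have hclaimB : r n ≤ (3 * ((phi k : ℝ)) + 1) / (6 * (((k:ℝ)) + 1) ^ 2) + 4 / ((k:ℝ)) := by
    rw [hb, div_add_div _ _ (by positivity) (by linarith), div_le_div_iff₀ (by positivity) (by positivity)]
    have h1 : ((phi k : ℝ)) * ((k:ℝ)) ^ 2 ≤ ((k:ℝ)) ^ 2 * ((k:ℝ)) ^ 2 := by nlinarith
    have h2 : ((phi k : ℝ)) * ((k:ℝ)) ≤ ((k:ℝ)) ^ 2 * ((k:ℝ)) := by nlinarith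
    have h3 : ((k:ℝ)) ≤ ((k:ℝ)) ^ 3 := by nlinarith
    have h4 : ((k:ℝ)) ≤ ((k:ℝ)) ^ 4 := by nlinarith
    nlinarith [h1, h2, h3, h4, hphi_1, hK, sq_nonneg ((k:ℝ))]
  refine ⟨r n, ⟨n, by omega, rfl⟩, ?_⟩
  rw [Real.dist_eq]
  have habs : |t - r n| ≤ 4 / ((k:ℝ)) := by
    rw [abs_sub_le_iff]
    constructor
    · linarith
    · linarith
  linarith
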